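/- Let p ∈ (1,2] and let X₁,…,Xₙ be independent nonnegative random variables in L^p, and c₁,…,cₙ ≥ 0. Then E[(∑ₖ cₖXₖ)^p] − (E[∑ₖ cₖXₖ])^p ≤ ∑ₖ cₖ^p (E[Xₖ^p] − (E[Xₖ])^p). -/

import Mathlib

open MeasureTheory ProbabilityTheory Set

section NeveuAux

variable {Ω : Type*} [MeasurableSpace Ω] {P : Measure Ω}

lemma phi_contOn {p : ℝ} (hp : 0 < p) (b : ℝ) :
    ContinuousOn (fun t : ℝ => (t + b) ^ p - t ^ p) (Ici 0) := by
  apply ContinuousOn.sub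
  · exact ((continuous_id.add continuous_const).continuousOn).rpow_const
      (fun x _ => Or.inr hp.le)
  · exact (continuousOn_id).rpow_const (fun x _ => Or.inr hp.le)

lemma phi_concave {p : ℝ} (hp1 : 1 < p) (hp2 : p ≤ 2) {b : ℝ} (hb : 0 ≤ b) :
    ConcaveOn ℝ (Ici 0) (fun t : ℝ => (t + b) ^ p - t ^ p) := by
  have hp0 : 0 < p := lt_trans one_pos hp1
  apply concaveOn_of_hasDerivWithinAt2_nonpos (convex_Ici 0) (phi_contOn hp0 b)
    (f' := fun t => p * (t + b) ^ (p-1) - p * t ^ (p-1))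
    (f'' := fun t => p * ((p-1) * (t + b) ^ (p-1-1)) - p * ((p-1) * t ^ (p-1-1)))
  · intro x hx
    rw [interior_Ici] at hx
    have hxb : x + b ≠ 0 := ne_of_gt (by simp only [Set.mem_Ioi] at hx; linarith)
    have h1 : HasDerivAt (fun t : ℝ => (t + b) ^ p) (p * (x + b) ^ (p-1)) x := by
      have := (Real.hasDerivAt_rpow_const (x := x + b) (p := p) (Or.inl hxb)).comp x
        ((hasDerivAt_id x).add_const b)
      simpa [Function.comp_def] using this
    have h2 : HasDerivAt (fun t : ℝ => t ^ p) (p * x ^ (p-1)) x :=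
      Real.hasDerivAt_rpow_const (Or.inl (ne_of_gt hx))
    exact (h1.sub h2).hasDerivWithinAt
  · intro x hx
    rw [interior_Ici] at hx
    have hxb : x + b ≠ 0 := ne_of_gt (by simp only [Set.mem_Ioi] at hx; linarith)
    have h1 : HasDerivAt (fun t : ℝ => p * (t + b) ^ (p-1)) (p * ((p-1) * (x + b) ^ (p-1-1))) x := by
      have := ((Real.hasDerivAt_rpow_const (x := x + b) (p := p-1) (Or.inl hxb)).comp x
        ((hasDerivAt_id x).add_const b)).const_mul p
      simpa using this
    have h2 : HasDerivAt (fun t : ℝ => p * t ^ (p-1)) (p * ((p-1) * x ^ (p-1-1))) x :=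
      (Real.hasDerivAt_rpow_const (Or.inl (ne_of_gt hx))).const_mul p
    exact (h1.sub h2).hasDerivWithinAt
  · intro x hx
    rw [interior_Ici] at hx
    have key : (x + b) ^ (p-1-1) ≤ x ^ (p-1-1) :=
      Real.rpow_le_rpow_of_nonpos hx (by linarith) (by linarith)
    have hpp : 0 ≤ p * (p - 1) := by nlinarith
    nlinarith [mul_le_mul_of_nonneg_left key hpp]

lemma integrable_rpow_of_memLp {p : ℝ} (hp1 : 1 < p) {Z : Ω → ℝ}
    (hZ0 : ∀ᵐ ω ∂P, 0 ≤ Z ω) (hZp : MemLp Z (ENNReal.ofReal p) P) :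
    Integrable (fun ω => (Z ω) ^ p) P := by
  have h := hZp.integrable_norm_rpow (by simp [ENNReal.ofReal_eq_zero]; linarith) ENNReal.ofReal_ne_top
  rw [ENNReal.toReal_ofReal (by linarith)] at h
  refine h.congr ?_
  filter_upwards [hZ0] with ω h0
  rw [Real.norm_of_nonneg h0]

lemma integrable_of_memLp {p : ℝ} (hp1 : 1 < p) [IsFiniteMeasure P] {Z : Ω → ℝ}
    (hZp : MemLp Z (ENNReal.ofReal p) P) : Integrable Z P :=
  hZp.integrable (by rw [ENNReal.one_le_ofReal]; linarith)

lemma jensen_step {p : ℝ} (hp1 : 1 < p) (hp2 : p ≤ 2) [IsProbabilityMeasure P]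
    {b : ℝ} (hb : 0 ≤ b)
    {Z : Ω → ℝ} (hZ0 : ∀ᵐ ω ∂P, 0 ≤ Z ω) (hZp : MemLp Z (ENNReal.ofReal p) P) :
    ∫ ω, (Z ω + b) ^ p ∂P ≤
      ((∫ ω, Z ω ∂P) + b) ^ p + ((∫ ω, (Z ω) ^ p ∂P) - (∫ ω, Z ω ∂P) ^ p) := by
  have hp0 : 0 < p := lt_trans one_pos hp1
  have hZint : Integrable Z P := integrable_of_memLp hp1 hZp
  have hZpint : Integrable (fun ω => (Z ω) ^ p) P := integrable_rpow_of_memLp hp1 hZ0 hZp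
  have hZbp : MemLp (fun ω => Z ω + b) (ENNReal.ofReal p) P := hZp.add (memLp_const b)
  have hZb0 : ∀ᵐ ω ∂P, 0 ≤ Z ω + b := by filter_upwards [hZ0] with ω h; linarith
  have hZbint : Integrable (fun ω => (Z ω + b) ^ p) P :=
    integrable_rpow_of_memLp hp1 hZb0 hZbp
  have hgi : Integrable ((fun t : ℝ => (t + b) ^ p - t ^ p) ∘ Z) P := by
    exact hZbint.sub hZpint
  have hj := (phi_concave hp1 hp2 hb).le_map_integral (phi_contOn hp0 b) isClosed_Ici
    hZ0 hZint hgi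
  rw [integral_sub hZbint hZpint] at hj
  linarith

lemma two_var {p : ℝ} (hp1 : 1 < p) (hp2 : p ≤ 2) [IsProbabilityMeasure P]
    {S Y : Ω → ℝ} (hSm : Measurable S) (hYm : Measurable Y)
    (hS0 : ∀ ω, 0 ≤ S ω) (hY0 : ∀ ω, 0 ≤ Y ω)
    (hSp : MemLp S (ENNReal.ofReal p) P) (hYp : MemLp Y (ENNReal.ofReal p) P)
    (hInd : IndepFun S Y P) :
    (∫ ω, (S ω + Y ω) ^ p ∂P) - (∫ ω, (S ω + Y ω) ∂P) ^ p ≤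
      ((∫ ω, (S ω) ^ p ∂P) - (∫ ω, S ω ∂P) ^ p) +
      ((∫ ω, (Y ω) ^ p ∂P) - (∫ ω, Y ω ∂P) ^ p) := by
  have hp0 : 0 < p := lt_trans one_pos hp1
  have hrm : Measurable (fun y : ℝ => y ^ p) := by
    have := Real.continuousAt_rpow_const
    fun_prop
  set μ : Measure ℝ := P.map S with hμ
  set ν : Measure ℝ := P.map Y with hν
  have hμP : IsProbabilityMeasure μ := Measure.isProbabilityMeasure_map hSm.aemeasurable
  have hνP : IsProbabilityMeasure ν := Measure.isProbabilityMeasure_map hYm.aemeasurable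
  have hIS : 0 ≤ ∫ ω, S ω ∂P := integral_nonneg hS0
  have hIY0 : 0 ≤ ∫ ω, Y ω ∂P := integral_nonneg hY0
  have hprod : P.map (fun ω => (S ω, Y ω)) = μ.prod ν :=
    (indepFun_iff_map_prod_eq_prod_map_map hSm.aemeasurable hYm.aemeasurable).1 hInd
  have hSY0 : ∀ ω, 0 ≤ S ω + Y ω := fun ω => add_nonneg (hS0 ω) (hY0 ω)
  have hSYp : MemLp (fun ω => S ω + Y ω) (ENNReal.ofReal p) P := hSp.add hYp
  have hSYint : Integrable (fun ω => (S ω + Y ω) ^ p) P :=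
    integrable_rpow_of_memLp hp1 (Filter.Eventually.of_forall hSY0) hSYp
  have hfm : Measurable fun z : ℝ × ℝ => (z.1 + z.2) ^ p :=
    hrm.comp (measurable_fst.add measurable_snd)
  have h1 : ∫ ω, (S ω + Y ω) ^ p ∂P = ∫ z, (z.1 + z.2) ^ p ∂(μ.prod ν) := by
    rw [← hprod, integral_map (hSm.prodMk hYm).aemeasurable hfm.aestronglyMeasurable]
  have hint_prod : Integrable (fun z : ℝ × ℝ => (z.1 + z.2) ^ p) (μ.prod ν) := by
    rw [← hprod, integrable_map_measure hfm.aestronglyMeasurable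
      (hSm.prodMk hYm).aemeasurable]
    exact hSYint
  have h2 : ∫ z, (z.1 + z.2) ^ p ∂(μ.prod ν) = ∫ s, ∫ y, (s + y) ^ p ∂ν ∂μ :=
    integral_prod _ hint_prod
  have hidν : MemLp (fun y : ℝ => y) (ENNReal.ofReal p) ν :=
    (memLp_map_measure_iff measurable_id'.aestronglyMeasurable hYm.aemeasurable).2 hYp
  have hν0 : ∀ᵐ y ∂ν, 0 ≤ y :=
    (ae_map_iff hYm.aemeasurable measurableSet_Ici).2 (Filter.Eventually.of_forall hY0)
  have hIYeq : ∫ y, y ∂ν = ∫ ω, Y ω ∂P :=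
    integral_map hYm.aemeasurable measurable_id'.aestronglyMeasurable
  have hJYeq : ∫ y, y ^ p ∂ν = ∫ ω, (Y ω) ^ p ∂P :=
    integral_map hYm.aemeasurable hrm.aestronglyMeasurable
  have hμ0 : ∀ᵐ s ∂μ, 0 ≤ s :=
    (ae_map_iff hSm.aemeasurable measurableSet_Ici).2 (Filter.Eventually.of_forall hS0)
  set IY := ∫ ω, Y ω ∂P with hIYdef
  set JY := ∫ ω, (Y ω) ^ p ∂P with hJYdef
  have hIY : 0 ≤ IY := hIY0
  have inner_bound : ∀ᵐ s ∂μ, ∫ y, (s + y) ^ p ∂ν ≤ (s + IY) ^ p + (JY - IY ^ p) := by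
    filter_upwards [hμ0] with s hs
    have hjs := jensen_step (P := ν) hp1 hp2 hs hν0 hidν
    rw [hIYeq, hJYeq] at hjs
    calc ∫ y, (s + y) ^ p ∂ν = ∫ y, (y + s) ^ p ∂ν := by
          congr 1; ext y; rw [add_comm]
      _ ≤ (IY + s) ^ p + (JY - IY ^ p) := hjs
      _ = (s + IY) ^ p + (JY - IY ^ p) := by rw [add_comm IY s]
  have hLHSint : Integrable (fun s => ∫ y, (s + y) ^ p ∂ν) μ := hint_prod.integral_prod_left
  have hidμ : MemLp (fun s : ℝ => s) (ENNReal.ofReal p) μ :=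
    (memLp_map_measure_iff measurable_id'.aestronglyMeasurable hSm.aemeasurable).2 hSp
  have hOint : Integrable (fun s : ℝ => (s + IY) ^ p) μ := by
    have hm : MemLp (fun s : ℝ => s + IY) (ENNReal.ofReal p) μ := hidμ.add (memLp_const IY)
    exact integrable_rpow_of_memLp hp1 (by filter_upwards [hμ0] with s hs; linarith) hm
  have hRHSint : Integrable (fun s => (s + IY) ^ p + (JY - IY ^ p)) μ :=
    hOint.add (integrable_const _)
  have step1 : ∫ s, ∫ y, (s + y) ^ p ∂ν ∂μ ≤
      ∫ s, ((s + IY) ^ p + (JY - IY ^ p)) ∂μ :=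
    integral_mono_ae hLHSint hRHSint inner_bound
  have hsplit : ∫ s, ((s + IY) ^ p + (JY - IY ^ p)) ∂μ =
      (∫ s, (s + IY) ^ p ∂μ) + (JY - IY ^ p) := by
    rw [integral_add hOint (integrable_const _), integral_const, probReal_univ,
      one_smul]
  have outer := jensen_step (P := μ) hp1 hp2 hIY hμ0 hidμ
  have hISeq : ∫ s, s ∂μ = ∫ ω, S ω ∂P :=
    integral_map hSm.aemeasurable measurable_id'.aestronglyMeasurable
  have hJSeq : ∫ s, s ^ p ∂μ = ∫ ω, (S ω) ^ p ∂P :=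
    integral_map hSm.aemeasurable hrm.aestronglyMeasurable
  rw [hISeq, hJSeq] at outer
  have hsum : ∫ ω, (S ω + Y ω) ∂P = (∫ ω, S ω ∂P) + IY :=
    integral_add (integrable_of_memLp hp1 hSp) (integrable_of_memLp hp1 hYp)
  rw [h1, h2, hsum]
  linarith

lemma iIndepFun_congr_ae {ι : Type*} [Countable ι] {β : ι → Type*}
    {m : ∀ i, MeasurableSpace (β i)} {f g : ∀ i, Ω → β i}
    (h : iIndepFun (m := m) f P) (hfg : ∀ i, f i =ᵐ[P] g i) :
    iIndepFun (m := m) g P := by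
  rw [iIndepFun_iff_measure_inter_preimage_eq_mul] at h ⊢
  intro S sets hsets
  have h_ae : ∀ᵐ ω ∂P, ∀ i, f i ω = g i ω := ae_all_iff.2 hfg
  have h1 : P (⋂ i ∈ S, g i ⁻¹' sets i) = P (⋂ i ∈ S, f i ⁻¹' sets i) := by
    apply measure_congr
    rw [Filter.eventuallyEq_set]
    filter_upwards [h_ae] with ω hω
    simp only [Set.mem_iInter, Set.mem_preimage]
    constructor <;> intro hh i hi
    · rw [hω i]; exact hh i hi
    · rw [← hω i]; exact hh i hi
  have h2 : ∀ i ∈ S, P (g i ⁻¹' sets i) = P (f i ⁻¹' sets i) := by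
    intro i _
    apply measure_congr
    rw [Filter.eventuallyEq_set]
    filter_upwards [hfg i] with ω hω
    simp only [Set.mem_preimage, hω]
  rw [h1, h (S := S) hsets]
  exact (Finset.prod_congr rfl h2).symm

end NeveuAux

open MeasureTheory ProbabilityTheory

theorem neveu_lemma
    {Ω : Type*} [MeasurableSpace Ω] (P : Measure Ω) [IsProbabilityMeasure P]
    (p : ℝ) (hp1 : 1 < p) (hp2 : p ≤ 2)
    (n : ℕ) (X : Fin n → Ω → ℝ)
    (hIndep : iIndepFun X P)
    (hNonneg : ∀ i, ∀ ω, 0 ≤ X i ω)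
    (hLp : ∀ i, MemLp (X i) (ENNReal.ofReal p) P)
    (c : Fin n → ℝ) (hc : ∀ i, 0 ≤ c i) :
    (∫ ω, (∑ i, c i * X i ω) ^ p ∂P) - (∫ ω, ∑ i, c i * X i ω ∂P) ^ p ≤
      ∑ i, (c i) ^ p * ((∫ ω, (X i ω) ^ p ∂P) - (∫ ω, X i ω ∂P) ^ p) := by
  have hp0 : 0 < p := lt_trans one_pos hp1
  -- measurable nonnegative modifications
  set X' : Fin n → Ω → ℝ := fun i ω => max ((hLp i).1.mk (X i) ω) 0 with hX'def
  have hX'm : ∀ i, Measurable (X' i) := fun i =>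
    ((hLp i).1.stronglyMeasurable_mk.measurable).max measurable_const
  have hX'ae : ∀ i, X i =ᵐ[P] X' i := fun i => by
    filter_upwards [(hLp i).1.ae_eq_mk] with ω h
    simp only [hX'def, ← h, max_eq_left (hNonneg i ω)]
  have hX'0 : ∀ i ω, 0 ≤ X' i ω := fun i ω => le_max_right _ _
  have hX'p : ∀ i, MemLp (X' i) (ENNReal.ofReal p) P := fun i => (hLp i).ae_eq (hX'ae i)
  have hIndep' : iIndepFun X' P := iIndepFun_congr_ae hIndep hX'ae
  -- scaled variables
  set Y : Fin n → Ω → ℝ := fun i ω => c i * X' i ω with hYdef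
  have hYm : ∀ i, Measurable (Y i) := fun i => (hX'm i).const_mul (c i)
  have hY0 : ∀ i ω, 0 ≤ Y i ω := fun i ω => mul_nonneg (hc i) (hX'0 i ω)
  have hYp : ∀ i, MemLp (Y i) (ENNReal.ofReal p) P := fun i => (hX'p i).const_mul (c i)
  have hIndepY : iIndepFun Y P := by
    have := hIndep'.comp (fun i => fun x : ℝ => c i * x)
      (fun i => measurable_id.const_mul (c i))
    exact this
  -- key induction
  have key : ∀ s : Finset (Fin n),
      (∫ ω, (∑ i ∈ s, Y i ω) ^ p ∂P) - (∫ ω, ∑ i ∈ s, Y i ω ∂P) ^ p ≤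
        ∑ i ∈ s, ((∫ ω, (Y i ω) ^ p ∂P) - (∫ ω, Y i ω ∂P) ^ p) := by
    intro s
    induction s using Finset.cons_induction with
    | empty => simp [Real.zero_rpow (ne_of_gt hp0)]
    | cons a s ha ih =>
      simp only [Finset.sum_cons]
      have hSm : Measurable (fun ω => ∑ i ∈ s, Y i ω) :=
        Finset.measurable_sum s (fun i _ => hYm i)
      have hS0 : ∀ ω, 0 ≤ ∑ i ∈ s, Y i ω := fun ω =>
        Finset.sum_nonneg (fun i _ => hY0 i ω)
      have hSp : MemLp (fun ω => ∑ i ∈ s, Y i ω) (ENNReal.ofReal p) P :=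
        memLp_finset_sum s (fun i _ => hYp i)
      have hInd : IndepFun (Y a) (fun ω => ∑ i ∈ s, Y i ω) P := by
        have h0 : IndepFun (∑ j ∈ s, Y j) (Y a) P :=
          hIndepY.indepFun_finsetSum_of_notMem hYm ha
        have he : (∑ j ∈ s, Y j) = (fun ω => ∑ i ∈ s, Y i ω) := by
          ext ω; simp [Finset.sum_apply]
        rw [he] at h0
        exact h0.symm
      have h2v := two_var (P := P) hp1 hp2 (hYm a) hSm (hY0 a) hS0 (hYp a) hSp hInd
      linarith
  -- transfer to original variables
  have h_ae : ∀ᵐ ω ∂P, ∀ i, X i ω = X' i ω := ae_all_iff.2 hX'ae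
  have e1 : ∫ ω, (∑ i, c i * X i ω) ^ p ∂P = ∫ ω, (∑ i, Y i ω) ^ p ∂P := by
    apply integral_congr_ae
    filter_upwards [h_ae] with ω hω
    simp only [hYdef]
    congr 1
    exact Finset.sum_congr rfl (fun i _ => by rw [hω i])
  have e2 : ∫ ω, ∑ i, c i * X i ω ∂P = ∫ ω, ∑ i, Y i ω ∂P := by
    apply integral_congr_ae
    filter_upwards [h_ae] with ω hω
    exact Finset.sum_congr rfl (fun i _ => by rw [hω i])
  have e3 : ∀ i, (∫ ω, (Y i ω) ^ p ∂P) - (∫ ω, Y i ω ∂P) ^ p =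
      (c i) ^ p * ((∫ ω, (X i ω) ^ p ∂P) - (∫ ω, X i ω ∂P) ^ p) := by
    intro i
    have eX : ∫ ω, X i ω ∂P = ∫ ω, X' i ω ∂P := integral_congr_ae (hX'ae i)
    have eXp : ∫ ω, (X i ω) ^ p ∂P = ∫ ω, (X' i ω) ^ p ∂P :=
      integral_congr_ae (by filter_upwards [hX'ae i] with ω h; rw [h])
    have h1 : ∫ ω, (Y i ω) ^ p ∂P = (c i) ^ p * ∫ ω, (X' i ω) ^ p ∂P := by
      rw [← integral_const_mul]
      apply integral_congr_ae
      filter_upwards with ω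
      simp only [hYdef]
      rw [Real.mul_rpow (hc i) (hX'0 i ω)]
    have h2 : ∫ ω, Y i ω ∂P = c i * ∫ ω, X' i ω ∂P := by
      simp only [hYdef]
      rw [integral_const_mul]
    have hXI0 : 0 ≤ ∫ ω, X' i ω ∂P := integral_nonneg (hX'0 i)
    rw [h1, h2, Real.mul_rpow (hc i) hXI0, eX, eXp]
    ring
  rw [e1, e2]
  calc (∫ ω, (∑ i, Y i ω) ^ p ∂P) - (∫ ω, ∑ i, Y i ω ∂P) ^ p
      ≤ ∑ i, ((∫ ω, (Y i ω) ^ p ∂P) - (∫ ω, Y i ω ∂P) ^ p) := key Finset.univ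
    _ = ∑ i, (c i) ^ p * ((∫ ω, (X i ω) ^ p ∂P) - (∫ ω, X i ω ∂P) ^ p) :=
        Finset.sum_congr rfl (fun i _ => e3 i)
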